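/- Let (ζ_t^O : t ≥ 0) be the standard specifications randomly fluctuating intervals process with expansion parameter p ∈ (0,1) started from ζ_0 = {0}, and let f_t(x) = P(x ∈ ζ_t^O) be its occupancy function. Then for every t ≥ 0, f_t is an even function of x ∈ ℤ (f_t(x) = f_t(−x) for all x) and f_t is decreasing in |x| (f_t(x) ≥ f_t(y) whenever |x| ≤ |y|). -/

import Mathlib

/- The standard specifications randomly fluctuating intervals process.
States: `none` = empty set, `some (l, r)` with `l ≤ r` = the integer interval {l, ..., r}. -/

open MeasureTheory
open scoped ENNReal

namespace RFI

abbrev State := Option (ℤ × ℤ)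

/-- Geometric distribution on ℕ: P(N = n) = (1 - p) * p ^ n. -/
noncomputable def geom (p : ℝ≥0∞) (hp : p < 1) : PMF ℕ :=
  ⟨fun n => (1 - p) * p ^ n, by
    refine ENNReal.summable.hasSum_iff.mpr ?_
    rw [ENNReal.tsum_mul_left, ENNReal.tsum_geometric]
    exact ENNReal.mul_inv_cancel
      (fun h => (not_le.mpr hp) (tsub_eq_zero_iff_le.mp h))
      (lt_of_le_of_lt tsub_le_self ENNReal.one_lt_top).ne⟩

/-- All integer subintervals of {l, ..., r}, including the empty set. -/
noncomputable def subIntervals (l r : ℤ) : Finset State :=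
  insert none
    (((Finset.Icc l r ×ˢ Finset.Icc l r).filter (fun q => q.1 ≤ q.2)).image
      (fun q => some q))

/-- Transition kernel: a uniform contraction followed by independent
geometric expansions of the two endpoints; the empty set is absorbing. -/
noncomputable def step (p : ℝ≥0∞) (hp : p < 1) : State → PMF State
  | none => PMF.pure none
  | some (l, r) =>
      (PMF.uniformOfFinset (subIntervals l r) (Finset.insert_nonempty _ _)).bind fun c =>
        match c with
        | none => PMF.pure none
        | some (a, b) =>
            (geom p hp).bind fun nL =>
              (geom p hp).bind fun nR =>
                PMF.pure (some (a - nL, b + nR))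

/-- Distribution at time `t` of the process started from `init`. -/
noncomputable def dist (p : ℝ≥0∞) (hp : p < 1) (init : State) : ℕ → PMF State
  | 0 => PMF.pure init
  | t + 1 => (dist p hp init t).bind (step p hp)

/-- `x` is occupied, i.e. belongs to the interval represented by the state. -/
def memS (x : ℤ) : State → Prop
  | none => False
  | some (l, r) => l ≤ x ∧ x ≤ r

/-- Occupancy function: probability that `x` belongs to the process at time `t`,
started from the singleton {a}. -/
noncomputable def occ (p : ℝ≥0∞) (hp : p < 1) (a : ℤ) (t : ℕ) (x : ℤ) : ℝ≥0∞ :=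
  (dist p hp (some (a, a)) t).toOuterMeasure {s | memS x s}

def SU (c : ℤ) (g : ℤ → ℝ≥0∞) : Prop :=
  (∀ x, g x = g (c - x)) ∧ (∀ x, c ≤ 2 * x → g (x + 1) ≤ g x)

lemma SU.of_zero {c : ℤ} {g : ℤ → ℝ≥0∞} (h : ∀ x, g x = 0) : SU c g :=
  ⟨fun x => by rw [h, h], fun x _ => by rw [h, h]⟩

lemma SU.anti {c : ℤ} {g : ℤ → ℝ≥0∞} (h : SU c g) :
    ∀ (n : ℕ) (x : ℤ), c ≤ 2 * x → g (x + n) ≤ g x := by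
  intro n
  induction n with
  | zero => intro x _; simp
  | succ n ih =>
    intro x hx
    have h1 : x + ((n : ℤ) + 1) = (x + n) + 1 := by ring
    calc g (x + ((n:ℕ)+1 : ℕ)) = g ((x + n) + 1) := by rw [← h1]; push_cast; ring_nf
      _ ≤ g (x + n) := h.2 _ (by omega)
      _ ≤ g x := ih x hx

lemma SU.mono_abs {c : ℤ} {g : ℤ → ℝ≥0∞} (h : SU c g) {x y : ℤ}
    (hxy : |2 * y - c| ≤ |2 * x - c|) : g x ≤ g y := by
  have habs : ∀ z : ℤ, |2 * z - c| = 2 * max z (c - z) - c := by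
    intro z
    rcases abs_cases (2 * z - c) with ⟨h2, h3⟩ | ⟨h2, h3⟩ <;>
      rcases max_cases z (c - z) with ⟨h4, h5⟩ | ⟨h4, h5⟩ <;> omega
  have hgx : g x = g (max x (c - x)) := by
    rcases max_cases x (c - x) with ⟨h1, _⟩ | ⟨h1, _⟩ <;> rw [h1]
    exact h.1 x
  have hgy : g y = g (max y (c - y)) := by
    rcases max_cases y (c - y) with ⟨h1, _⟩ | ⟨h1, _⟩ <;> rw [h1]
    exact h.1 y
  set X := max x (c - x) with hX
  set Y := max y (c - y) with hY
  have hYc : c ≤ 2 * Y := by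
    have h1 := le_max_left y (c - y); have h2 := le_max_right y (c - y); omega
  have hYX : Y ≤ X := by rw [habs x, habs y] at hxy; omega
  have hXY : X = Y + ((X - Y).toNat : ℤ) := by omega
  calc g x = g X := hgx
    _ = g (Y + ((X - Y).toNat : ℤ)) := by rw [← hXY]
    _ ≤ g Y := h.anti _ Y hYc
    _ = g y := hgy.symm

lemma SU.tsum_fun {ι : Type*} {c : ℤ} {g : ι → ℤ → ℝ≥0∞} (h : ∀ i, SU c (g i)) :
    SU c (fun x => ∑' i, g i x) :=
  ⟨fun x => tsum_congr fun i => (h i).1 x,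
   fun x hx => ENNReal.tsum_le_tsum fun i => (h i).2 x hx⟩

/-- Peel off the bottom element of a window sum. -/
lemma peel_bot {A B : ℤ} (hAB : A ≤ B) (F : ℤ → ℝ≥0∞) :
    (∑' y : ℤ, if A ≤ y ∧ y ≤ B then F y else 0)
      = F A + ∑' y : ℤ, if A + 1 ≤ y ∧ y ≤ B then F y else 0 := by
  classical
  rw [ENNReal.tsum_eq_add_tsum_ite (f := fun y : ℤ => if A ≤ y ∧ y ≤ B then F y else 0) A]
  congr 1
  · rw [if_pos ⟨le_refl A, hAB⟩]
  · apply tsum_congr; intro y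
    by_cases h1 : y = A
    · rw [if_pos h1, if_neg (by omega)]
    · rw [if_neg h1]
      by_cases h2 : A ≤ y ∧ y ≤ B
      · rw [if_pos h2, if_pos (by omega)]
      · rw [if_neg h2, if_neg (by omega)]

/-- Peel off the top element of a window sum. -/
lemma peel_top {A B : ℤ} (hAB : A ≤ B) (F : ℤ → ℝ≥0∞) :
    (∑' y : ℤ, if A ≤ y ∧ y ≤ B then F y else 0)
      = (∑' y : ℤ, if A ≤ y ∧ y ≤ B - 1 then F y else 0) + F B := by
  classical
  rw [ENNReal.tsum_eq_add_tsum_ite (f := fun y : ℤ => if A ≤ y ∧ y ≤ B then F y else 0) B, add_comm]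
  congr 1
  · apply tsum_congr; intro y
    by_cases h1 : y = B
    · rw [if_pos h1, if_neg (by omega)]
    · rw [if_neg h1]
      by_cases h2 : A ≤ y ∧ y ≤ B
      · rw [if_pos h2, if_pos (by omega)]
      · rw [if_neg h2, if_neg (by omega)]
  · rw [if_pos ⟨hAB, le_refl B⟩]

lemma window_mono {c1 c2 : ℤ} {v : ℤ → ℝ≥0∞} (hv : SU c2 v) {x k : ℤ}
    (hk : c1 ≤ 2 * k) (hx : c1 + c2 ≤ 2 * x) :
    (∑' y : ℤ, (if c1 - k ≤ y ∧ y ≤ k then (1 : ℝ≥0∞) else 0) * v (x + 1 - y))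
      ≤ ∑' y : ℤ, (if c1 - k ≤ y ∧ y ≤ k then (1 : ℝ≥0∞) else 0) * v (x - y) := by
  have e1 : ∀ (z y : ℤ), (if c1 - k ≤ y ∧ y ≤ k then (1 : ℝ≥0∞) else 0) * v (z - y)
      = if c1 - k ≤ y ∧ y ≤ k then v (z - y) else 0 := by
    intro z y; split_ifs <;> simp
  simp only [e1]
  have e2 : (∑' y : ℤ, if c1 - k ≤ y ∧ y ≤ k then v (x + 1 - y) else 0)
      = ∑' y : ℤ, if c1 - k - 1 ≤ y ∧ y ≤ k - 1 then v (x - y) else 0 := by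
    rw [← (Equiv.addRight (1 : ℤ)).tsum_eq
      (fun y => if c1 - k ≤ y ∧ y ≤ k then v (x + 1 - y) else 0)]
    apply tsum_congr; intro y
    simp only [Equiv.coe_addRight]
    exact if_congr (by omega) (congrArg v (by ring)) rfl
  rw [e2]
  rw [peel_bot (by omega : c1 - k - 1 ≤ k - 1), peel_top (by omega : c1 - k ≤ k)]
  rw [show c1 - k - 1 + 1 = c1 - k by ring, add_comm]
  apply add_le_add le_rfl
  apply hv.mono_abs
  apply abs_le_abs (by omega)
  omega

lemma tail_telescope {u : ℤ → ℝ≥0∞} {Y : ℤ}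
    (hmono : ∀ k, Y ≤ k → u (k + 1) ≤ u k) (hufin : (∑' y : ℤ, u y) ≠ ⊤) :
    (∑' k : ℤ, if Y ≤ k then u k - u (k + 1) else 0) = u Y := by
  classical
  have hinj : Function.Injective (fun n : ℕ => Y + (n : ℤ)) := by
    intro a b h; simp only [] at h; omega
  have hsupp : Function.support (fun k : ℤ => if Y ≤ k then u k - u (k + 1) else 0)
      ⊆ Set.range (fun n : ℕ => Y + (n : ℤ)) := by
    intro k hk
    simp only [Function.mem_support, ne_eq] at hk
    have hYk : Y ≤ k := by by_contra h; exact hk (if_neg h)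
    exact ⟨(k - Y).toNat, by simp only []; omega⟩
  rw [← hinj.tsum_eq hsupp]
  have hsimp : ∀ n : ℕ, (if Y ≤ Y + (n : ℤ) then u (Y + n) - u (Y + n + 1) else 0)
      = u (Y + n) - u (Y + n + 1) := fun n => if_pos (by omega)
  rw [tsum_congr hsimp]
  have hfinN : (∑' n : ℕ, u (Y + (n : ℤ))) ≠ ⊤ :=
    ne_top_of_le_ne_top hufin (ENNReal.tsum_comp_le_tsum_of_injective hinj u)
  have key : ∀ N : ℕ, (∑ n ∈ Finset.range N, (u (Y + (n : ℤ)) - u (Y + n + 1)))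
      + u (Y + (N : ℤ)) = u Y := by
    intro N; induction N with
    | zero => simp
    | succ N ih =>
      rw [Finset.sum_range_succ]
      have h2 : Y + ((N : ℕ) + 1 : ℕ) = (Y + N) + 1 := by push_cast; ring
      rw [h2, add_assoc, tsub_add_cancel_of_le (hmono (Y + N) (by omega))]
      exact ih
  apply le_antisymm
  · apply ENNReal.tsum_le_of_sum_range_le
    intro N
    calc (∑ n ∈ Finset.range N, (u (Y + (n : ℤ)) - u (Y + n + 1)))
        ≤ (∑ n ∈ Finset.range N, (u (Y + (n : ℤ)) - u (Y + n + 1))) + u (Y + (N : ℤ)) :=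
          le_self_add
      _ = u Y := key N
  · apply ENNReal.le_of_forall_pos_le_add
    intro ε hε _
    obtain ⟨N, hN⟩ : ∃ N : ℕ, u (Y + (N : ℤ)) ≤ (ε : ℝ≥0∞) := by
      have ht := ENNReal.tendsto_atTop_zero_of_tsum_ne_top hfinN
      have h2 := ht.eventually_lt_const (by exact_mod_cast hε : (0 : ℝ≥0∞) < ε)
      obtain ⟨N, hN⟩ := h2.exists
      exact ⟨N, hN.le⟩
    calc u Y = (∑ n ∈ Finset.range N, (u (Y + (n : ℤ)) - u (Y + n + 1))) + u (Y + (N : ℤ)) :=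
          (key N).symm
      _ ≤ (∑' n : ℕ, (u (Y + (n : ℤ)) - u (Y + n + 1))) + (ε : ℝ≥0∞) :=
          add_le_add (ENNReal.sum_le_tsum _) hN

lemma su_block_repr {c1 : ℤ} {u : ℤ → ℝ≥0∞} (hu : SU c1 u)
    (hufin : (∑' y : ℤ, u y) ≠ ⊤) (y : ℤ) :
    u y = ∑' k : ℤ, (if c1 ≤ 2 * k then u k - u (k + 1) else 0)
      * (if c1 - k ≤ y ∧ y ≤ k then 1 else 0) := by
  classical
  have hY1 : u (max y (c1 - y)) = u y := by
    rcases max_cases y (c1 - y) with ⟨h1, _⟩ | ⟨h1, _⟩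
    · rw [h1]
    · rw [h1, ← hu.1 y]
  set Y := max y (c1 - y) with hYdef
  have hYc : c1 ≤ 2 * Y := by
    have h1 := le_max_left y (c1 - y); have h2 := le_max_right y (c1 - y); omega
  have hiff : ∀ k : ℤ, (c1 - k ≤ y ∧ y ≤ k) ↔ Y ≤ k := by
    intro k; rw [hYdef, max_le_iff]; omega
  have hterm : ∀ k : ℤ, (if c1 ≤ 2 * k then u k - u (k + 1) else 0)
      * (if c1 - k ≤ y ∧ y ≤ k then (1 : ℝ≥0∞) else 0)
      = if Y ≤ k then u k - u (k + 1) else 0 := by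
    intro k
    by_cases hw : Y ≤ k
    · rw [if_pos ((hiff k).2 hw), if_pos (by omega : c1 ≤ 2 * k), if_pos hw, mul_one]
    · rw [if_neg (fun hww => hw ((hiff k).1 hww)), if_neg hw, mul_zero]
  rw [tsum_congr hterm, tail_telescope (fun k hk => hu.2 k (by omega)) hufin, hY1]

lemma SU.conv {c1 c2 : ℤ} {u v : ℤ → ℝ≥0∞} (hu : SU c1 u) (hv : SU c2 v)
    (hufin : (∑' y : ℤ, u y) ≠ ⊤) :
    SU (c1 + c2) (fun x => ∑' y : ℤ, u y * v (x - y)) := by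
  classical
  constructor
  · intro x
    show (∑' y : ℤ, u y * v (x - y)) = ∑' y : ℤ, u y * v (c1 + c2 - x - y)
    have h1 : (∑' y : ℤ, u y * v (c1 + c2 - x - y))
        = ∑' y : ℤ, u (c1 - y) * v (c1 + c2 - x - (c1 - y)) :=
      ((Equiv.subLeft c1).tsum_eq (fun y => u y * v (c1 + c2 - x - y))).symm
    rw [h1]
    apply tsum_congr; intro y
    rw [← hu.1 y]
    congr 1
    rw [hv.1 (x - y)]
    congr 1; ring
  · intro x hx
    show (∑' y : ℤ, u y * v (x + 1 - y)) ≤ ∑' y : ℤ, u y * v (x - y)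
    have hrw : ∀ z : ℤ, (∑' y : ℤ, u y * v (z - y))
        = ∑' k : ℤ, (if c1 ≤ 2 * k then u k - u (k + 1) else 0)
            * ∑' y : ℤ, (if c1 - k ≤ y ∧ y ≤ k then (1 : ℝ≥0∞) else 0) * v (z - y) := by
      intro z
      calc (∑' y : ℤ, u y * v (z - y))
          = ∑' y : ℤ, ∑' k : ℤ, (if c1 ≤ 2 * k then u k - u (k + 1) else 0)
              * (if c1 - k ≤ y ∧ y ≤ k then (1 : ℝ≥0∞) else 0) * v (z - y) := by
            apply tsum_congr; intro y
            rw [su_block_repr hu hufin y, ENNReal.tsum_mul_right]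
        _ = ∑' k : ℤ, ∑' y : ℤ, (if c1 ≤ 2 * k then u k - u (k + 1) else 0)
              * (if c1 - k ≤ y ∧ y ≤ k then (1 : ℝ≥0∞) else 0) * v (z - y) :=
            ENNReal.tsum_comm
        _ = _ := by
            apply tsum_congr; intro k
            rw [← ENNReal.tsum_mul_left]
            apply tsum_congr; intro y
            ring
    rw [hrw (x + 1), hrw x]
    apply ENNReal.tsum_le_tsum; intro k
    by_cases hk : c1 ≤ 2 * k
    · exact mul_le_mul_right (window_mono hv hk hx) _
    · rw [if_neg hk, zero_mul, zero_mul]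

lemma geom_apply (hp : p < 1) (n : ℕ) : geom p hp n = (1 - p) * p ^ n := rfl

lemma tsum_state (f : State → ℝ≥0∞) :
    ∑' s : State, f s = f none + ∑' q : ℤ × ℤ, f (some q) := by
  classical
  rw [Summable.tsum_eq_add_tsum_ite' (f := f) (none : State) ENNReal.summable]
  congr 1
  have hinj : Function.Injective (fun q : ℤ × ℤ => (some q : State)) := by
    intro a b h; simpa using h
  rw [← hinj.tsum_eq (f := fun s : State => if s = none then 0 else f s) ?_]
  · apply tsum_congr; intro q; simp
  · intro s hs
    match s with
    | none => simp [Function.mem_support] at hs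
    | some q => exact ⟨q, rfl⟩

lemma mem_subIntervals {l0 r0 a b : ℤ} :
    (some (a, b) : State) ∈ subIntervals l0 r0 ↔ l0 ≤ a ∧ a ≤ b ∧ b ≤ r0 := by
  simp only [subIntervals, Finset.mem_insert, Finset.mem_image, Finset.mem_filter,
    Finset.mem_product, Finset.mem_Icc, reduceCtorEq, false_or]
  constructor
  · rintro ⟨⟨a', b'⟩, ⟨⟨⟨h1, h2⟩, h3, h4⟩, h5⟩, h6⟩
    simp only [Option.some.injEq, Prod.mk.injEq] at h6
    omega
  · rintro ⟨h1, h2, h3⟩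
    exact ⟨(a, b), ⟨⟨⟨h1, by omega⟩, by omega, h3⟩, h2⟩, rfl⟩

lemma none_mem_subIntervals (l0 r0 : ℤ) : (none : State) ∈ subIntervals l0 r0 := by
  simp [subIntervals]

lemma card_subIntervals (l0 r0 : ℤ) :
    (subIntervals l0 r0).card = (subIntervals 0 (r0 - l0)).card := by
  apply Finset.card_nbij' (i := fun s => Option.map (fun q : ℤ × ℤ => (q.1 - l0, q.2 - l0)) s)
    (j := fun s => Option.map (fun q : ℤ × ℤ => (q.1 + l0, q.2 + l0)) s)
  · intro s hs
    match s with
    | none => exact none_mem_subIntervals _ _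
    | some (a, b) =>
      rw [Finset.mem_coe, mem_subIntervals] at hs
      simp only [Option.map_some, Finset.mem_coe]
      rw [mem_subIntervals]; omega
  · intro s hs
    match s with
    | none => exact none_mem_subIntervals _ _
    | some (a, b) =>
      rw [Finset.mem_coe, mem_subIntervals] at hs
      simp only [Option.map_some, Finset.mem_coe]
      rw [mem_subIntervals]; omega
  · intro s _
    match s with
    | none => rfl
    | some (a, b) => simp
  · intro s _
    match s with
    | none => rfl
    | some (a, b) => simp

lemma expand_apply (hp : p < 1) (a b l r : ℤ) :
    ((geom p hp).bind fun nL => (geom p hp).bind fun nR =>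
        PMF.pure (some (a - nL, b + nR)) : PMF State) (some (l, r))
      = if l ≤ a ∧ b ≤ r
          then ((1 - p) * p ^ (a - l).toNat) * ((1 - p) * p ^ (r - b).toNat) else 0 := by
  classical
  simp only [PMF.bind_apply, PMF.pure_apply, geom_apply]
  by_cases h : l ≤ a ∧ b ≤ r
  · rw [if_pos h]
    refine (tsum_eq_single (a - l).toNat fun n hn => ?_).trans ?_
    · apply mul_eq_zero_of_right
      apply ENNReal.tsum_eq_zero.2
      intro nR
      apply mul_eq_zero_of_right
      apply if_neg
      intro hc
      simp only [Option.some.injEq, Prod.mk.injEq] at hc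
      omega
    · congr 1
      refine (tsum_eq_single (r - b).toNat fun m hm => ?_).trans ?_
      · apply mul_eq_zero_of_right
        apply if_neg
        intro hc
        simp only [Option.some.injEq, Prod.mk.injEq] at hc
        omega
      · have hc : (some (l, r) : State)
            = some (a - ((a - l).toNat : ℤ), b + ((r - b).toNat : ℤ)) := by
          simp only [Option.some.injEq, Prod.mk.injEq]
          omega
        rw [if_pos hc, mul_one]
  · rw [if_neg h]
    apply ENNReal.tsum_eq_zero.2
    intro nL
    apply mul_eq_zero_of_right
    apply ENNReal.tsum_eq_zero.2
    intro nR
    apply mul_eq_zero_of_right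
    apply if_neg
    intro hc
    simp only [Option.some.injEq, Prod.mk.injEq] at hc
    omega

noncomputable def Hh (p : ℝ≥0∞) (m D : ℤ) : ℝ≥0∞ :=
  ∑' q : ℤ × ℤ, if 0 ≤ q.1 ∧ q.1 ≤ q.2 ∧ q.2 ≤ D
    then (1 - p) ^ 2 * p ^ (m - (q.2 - q.1)).toNat else 0

lemma Hh_mono {m D D' : ℤ} (h : D ≤ D') : Hh p m D ≤ Hh p m D' := by
  apply ENNReal.tsum_le_tsum
  intro q
  by_cases h1 : 0 ≤ q.1 ∧ q.1 ≤ q.2 ∧ q.2 ≤ D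
  · rw [if_pos h1, if_pos ⟨h1.1, h1.2.1, le_trans h1.2.2 h⟩]
  · rw [if_neg h1]; exact zero_le

lemma Hh_zero_of_neg {m D : ℤ} (hD : D < 0) : Hh p m D = 0 := by
  apply ENNReal.tsum_eq_zero.2
  intro q
  rw [if_neg (by omega)]

lemma step_eq (hp : p < 1) (l0 r0 l r : ℤ) :
    step p hp (some (l0, r0)) (some (l, r))
      = ((subIntervals 0 (r0 - l0)).card : ℝ≥0∞)⁻¹ * Hh p (r - l) (min r0 r - max l0 l) := by
  classical
  show ((PMF.uniformOfFinset (subIntervals l0 r0) (Finset.insert_nonempty _ _)).bind _)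
      (some (l, r)) = _
  rw [PMF.bind_apply, tsum_state]
  have h0 : (PMF.pure (none : State)) (some (l, r)) = 0 := by
    rw [PMF.pure_apply, if_neg (by simp)]
  rw [show (PMF.uniformOfFinset (subIntervals l0 r0) (Finset.insert_nonempty _ _)) none *
      (PMF.pure (none : State)) (some (l, r)) = 0 by rw [h0, mul_zero], zero_add]
  have hterm : ∀ q : ℤ × ℤ,
      (PMF.uniformOfFinset (subIntervals l0 r0) (Finset.insert_nonempty _ _)) (some q) *
        ((geom p hp).bind fun nL => (geom p hp).bind fun nR =>
          PMF.pure (some (q.1 - nL, q.2 + nR)) : PMF State) (some (l, r))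
      = ((subIntervals l0 r0).card : ℝ≥0∞)⁻¹ *
          if l0 ≤ q.1 ∧ q.1 ≤ q.2 ∧ q.2 ≤ r0 ∧ l ≤ q.1 ∧ q.2 ≤ r
            then ((1 - p) * p ^ (q.1 - l).toNat) * ((1 - p) * p ^ (r - q.2).toNat) else 0 := by
    intro q
    erw [PMF.uniformOfFinset_apply, expand_apply hp]
    by_cases h1 : (some q : State) ∈ subIntervals l0 r0
    · rw [if_pos h1]
      rw [mem_subIntervals (a := q.1) (b := q.2)] at h1
      by_cases h2 : l ≤ q.1 ∧ q.2 ≤ r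
      · rw [if_pos h2, if_pos (by tauto)]
      · rw [if_neg h2, if_neg (by tauto), mul_zero]
    · rw [if_neg h1, zero_mul]
      rw [mem_subIntervals (a := q.1) (b := q.2)] at h1
      rw [if_neg (by tauto), mul_zero]
  have hstep1 : (∑' q : ℤ × ℤ,
      (PMF.uniformOfFinset (subIntervals l0 r0) (Finset.insert_nonempty _ _)) (some q) *
        ((geom p hp).bind fun nL => (geom p hp).bind fun nR =>
          PMF.pure (some (q.1 - nL, q.2 + nR)) : PMF State) (some (l, r)))
      = ∑' q : ℤ × ℤ, ((subIntervals l0 r0).card : ℝ≥0∞)⁻¹ *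
      (if l0 ≤ q.1 ∧ q.1 ≤ q.2 ∧ q.2 ≤ r0 ∧ l ≤ q.1 ∧ q.2 ≤ r
        then ((1 - p) * p ^ (q.1 - l).toNat) * ((1 - p) * p ^ (r - q.2).toNat) else 0) := by
    apply tsum_congr; intro q; exact hterm q
  rw [show (∑' q : ℤ × ℤ,
      (PMF.uniformOfFinset (subIntervals l0 r0) (Finset.insert_nonempty _ _)) (some q) *
        (match (some q : State) with
          | none => PMF.pure none
          | some (a, b) => (geom p hp).bind fun nL => (geom p hp).bind fun nR =>
              PMF.pure (some (a - nL, b + nR)) : PMF State) (some (l, r)))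
      = ∑' q : ℤ × ℤ,
      (PMF.uniformOfFinset (subIntervals l0 r0) (Finset.insert_nonempty _ _)) (some q) *
        ((geom p hp).bind fun nL => (geom p hp).bind fun nR =>
          PMF.pure (some (q.1 - nL, q.2 + nR)) : PMF State) (some (l, r))
    from tsum_congr fun q => by obtain ⟨a, b⟩ := q; rfl]
  rw [hstep1, ENNReal.tsum_mul_left, card_subIntervals]
  congr 1
  rw [Hh]
  rw [← (Equiv.addRight ((max l0 l, max l0 l) : ℤ × ℤ)).tsum_eq
      (fun q : ℤ × ℤ => if l0 ≤ q.1 ∧ q.1 ≤ q.2 ∧ q.2 ≤ r0 ∧ l ≤ q.1 ∧ q.2 ≤ r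
        then ((1 - p) * p ^ (q.1 - l).toNat) * ((1 - p) * p ^ (r - q.2).toNat) else 0)]
  apply tsum_congr; intro q
  simp only [Equiv.coe_addRight, Prod.fst_add, Prod.snd_add]
  have hA1 := le_max_left l0 l
  have hA2 := le_max_right l0 l
  have hB1 := min_le_left r0 r
  have hB2 := min_le_right r0 r
  have hAB := max_choice l0 l
  have hAB' := min_choice r0 r
  by_cases h1 : 0 ≤ q.1 ∧ q.1 ≤ q.2 ∧ q.2 ≤ min r0 r - max l0 l
  · rw [if_pos h1]
    refine (if_pos (by omega)).trans ?_
    have he : (q.1 + (max l0 l, max l0 l).1 - l).toNat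
          + (r - (q.2 + (max l0 l, max l0 l).2)).toNat
        = (r - l - (q.2 - q.1)).toNat := by omega
    rw [← he, pow_add]
    ring
  · rw [if_neg h1]
    exact if_neg (by omega)


variable {p : ℝ≥0∞}

noncomputable def vker (p : ℝ≥0∞) (m0 m : ℤ) (z : ℤ) : ℝ≥0∞ :=
  ((subIntervals 0 m0).card : ℝ≥0∞)⁻¹ * Hh p m (min m0 (z + m) - max 0 z)

lemma step_eq_v (hp : p < 1) (l0 r0 l r : ℤ) :
    step p hp (some (l0, r0)) (some (l, r)) = vker p (r0 - l0) (r - l) (l - l0) := by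
  rw [step_eq hp, vker]
  congr 2
  have h1 := max_choice l0 l
  have h2 := min_choice r0 r
  have h3 := max_choice (0 : ℤ) (l - l0)
  have h4 := min_choice (r0 - l0) (l - l0 + (r - l))
  have h5 := le_max_left l0 l
  have h6 := le_max_right l0 l
  have h7 := min_le_left r0 r
  have h8 := min_le_right r0 r
  have h9 := le_max_left (0 : ℤ) (l - l0)
  have h10 := le_max_right (0 : ℤ) (l - l0)
  have h11 := min_le_left (r0 - l0) (l - l0 + (r - l))
  have h12 := min_le_right (r0 - l0) (l - l0 + (r - l))
  omega

lemma vker_su (m0 m : ℤ) : SU (m0 - m) (vker p m0 m) := by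
  constructor
  · intro z
    show _ * Hh p m _ = _ * Hh p m _
    congr 2
    have h1 := max_choice (0 : ℤ) z
    have h2 := min_choice m0 (z + m)
    have h3 := max_choice (0 : ℤ) (m0 - m - z)
    have h4 := min_choice m0 (m0 - m - z + m)
    have h5 := le_max_left (0 : ℤ) z
    have h6 := le_max_right (0 : ℤ) z
    have h7 := min_le_left m0 (z + m)
    have h8 := min_le_right m0 (z + m)
    have h9 := le_max_left (0 : ℤ) (m0 - m - z)
    have h10 := le_max_right (0 : ℤ) (m0 - m - z)
    have h11 := min_le_left m0 (m0 - m - z + m)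
    have h12 := min_le_right m0 (m0 - m - z + m)
    omega
  · intro z hz
    apply mul_le_mul_right
    apply Hh_mono
    have h1 := max_choice (0 : ℤ) z
    have h2 := min_choice m0 (z + m)
    have h3 := max_choice (0 : ℤ) (z + 1)
    have h4 := min_choice m0 (z + 1 + m)
    have h5 := le_max_left (0 : ℤ) z
    have h6 := le_max_right (0 : ℤ) z
    have h7 := min_le_left m0 (z + m)
    have h8 := min_le_right m0 (z + m)
    have h9 := le_max_left (0 : ℤ) (z + 1)
    have h10 := le_max_right (0 : ℤ) (z + 1)
    have h11 := min_le_left m0 (z + 1 + m)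
    have h12 := min_le_right m0 (z + 1 + m)
    omega

lemma step_none (hp : p < 1) (l r : ℤ) : step p hp none (some (l, r)) = 0 := by
  show (PMF.pure (none : State)) (some (l, r)) = 0
  rw [PMF.pure_apply, if_neg (by simp)]

/-- The inductive invariant: no mass on ill-formed intervals, and for every
length the left-endpoint distribution is symmetric unimodal about the
appropriate center. -/
def Good (μ : PMF State) : Prop :=
  (∀ l r : ℤ, r < l → μ (some (l, r)) = 0) ∧
  ∀ m : ℤ, SU (-m) (fun l => μ (some (l, l + m)))

lemma good_pure : Good (PMF.pure (some ((0 : ℤ), (0 : ℤ)))) := by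
  have hne : ∀ a b : ℤ, ¬(a = 0 ∧ b = 0) →
      (PMF.pure (some ((0 : ℤ), (0 : ℤ)))) (some (a, b)) = 0 := by
    intro a b h
    rw [PMF.pure_apply]
    apply if_neg
    intro hc
    simp only [Option.some.injEq, Prod.mk.injEq] at hc
    exact h hc
  constructor
  · intro l r h
    exact hne l r (by omega)
  · intro m
    constructor
    · intro x
      beta_reduce
      by_cases h : x = 0 ∧ m = 0
      · rw [show -m - x = x by omega]
      · rw [hne x (x + m) (by omega), hne (-m - x) (-m - x + m) (by omega)]
    · intro x hx
      beta_reduce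
      rw [hne (x + 1) (x + 1 + m) (by omega)]
      exact zero_le

def pairEquiv : ℤ × ℤ ≃ ℤ × ℤ where
  toFun q := (q.2, q.2 + q.1)
  invFun q := (q.2 - q.1, q.1)
  left_inv q := by obtain ⟨a, b⟩ := q; simp
  right_inv q := by obtain ⟨a, b⟩ := q; simp

lemma good_bind (hp : p < 1) {μ : PMF State} (hμ : Good μ) : Good (μ.bind (step p hp)) := by
  have hzero : ∀ l r : ℤ, r < l → (μ.bind (step p hp)) (some (l, r)) = 0 := by
    intro l r h
    rw [PMF.bind_apply]
    apply ENNReal.tsum_eq_zero.2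
    intro s
    apply mul_eq_zero_of_right
    match s with
    | none => exact step_none hp l r
    | some (a, b) =>
      rw [step_eq_v hp, vker, Hh_zero_of_neg ?_, mul_zero]
      have h1 := min_le_right (b - a) (l - a + (r - l))
      have h2 := le_max_left (0 : ℤ) (l - a)
      omega
  refine ⟨hzero, ?_⟩
  intro m
  rcases lt_or_ge m 0 with hm | hm
  · exact SU.of_zero (fun l => hzero l (l + m) (by omega))
  · have key : ∀ l : ℤ, (μ.bind (step p hp)) (some (l, l + m))
        = ∑' m0 : ℤ, ∑' l0 : ℤ, μ (some (l0, l0 + m0)) * vker p m0 m (l - l0) := by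
      intro l
      rw [PMF.bind_apply, tsum_state]
      rw [show μ none * step p hp none (some (l, l + m)) = 0 by
        rw [step_none hp, mul_zero], zero_add]
      rw [← pairEquiv.tsum_eq
        (fun q : ℤ × ℤ => μ (some q) * step p hp (some q) (some (l, l + m)))]
      rw [ENNReal.tsum_prod']
      apply tsum_congr; intro m0
      apply tsum_congr; intro l0
      show μ (some (pairEquiv (m0, l0))) * step p hp (some (pairEquiv (m0, l0))) (some (l, l + m)) = _
      show μ (some (l0, l0 + m0)) * step p hp (some (l0, l0 + m0)) (some (l, l + m)) = _
      rw [step_eq_v hp, show l0 + m0 - l0 = m0 by ring, show l + m - l = m by ring]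
    have hfin : ∀ m0 : ℤ, (∑' l0 : ℤ, μ (some (l0, l0 + m0))) ≠ ⊤ := by
      intro m0
      apply ne_top_of_le_ne_top (by rw [PMF.tsum_coe]; exact ENNReal.one_ne_top :
        (∑' s : State, μ s) ≠ ⊤)
      exact ENNReal.tsum_comp_le_tsum_of_injective (fun a b h => by
        simp only [Option.some.injEq, Prod.mk.injEq] at h; exact h.1) _
    have hSU : ∀ m0 : ℤ,
        SU (-m) (fun l => ∑' l0 : ℤ, μ (some (l0, l0 + m0)) * vker p m0 m (l - l0)) := by
      intro m0
      have h := SU.conv (hμ.2 m0) (vker_su (p := p) m0 m) (hfin m0)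
      rw [show -m0 + (m0 - m) = -m from by ring] at h
      exact h
    have heq : (fun l => (μ.bind (step p hp)) (some (l, l + m)))
        = fun l => ∑' m0 : ℤ, ∑' l0 : ℤ, μ (some (l0, l0 + m0)) * vker p m0 m (l - l0) :=
      funext key
    rw [heq]
    exact SU.tsum_fun hSU

lemma good_dist (hp : p < 1) (t : ℕ) : Good (dist p hp (some ((0 : ℤ), (0 : ℤ))) t) := by
  induction t with
  | zero => exact good_pure
  | succ t ih => exact good_bind hp ih

lemma occ_su (hp : p < 1) (t : ℕ) : SU 0 (fun x => occ p hp 0 t x) := by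
  classical
  obtain ⟨hzero, hsu⟩ := good_dist hp t
  set μ := dist p hp (some ((0 : ℤ), (0 : ℤ))) t with hμ
  have key : ∀ x : ℤ, occ p hp 0 t x
      = ∑' m0 : ℤ, ∑' l0 : ℤ, μ (some (l0, l0 + m0))
          * (if 0 ≤ x - l0 ∧ x - l0 ≤ m0 then 1 else 0) := by
    intro x
    rw [occ, PMF.toOuterMeasure_apply]
    rw [tsum_state (fun s => Set.indicator {s | memS x s} (⇑μ) s)]
    rw [show Set.indicator {s | memS x s} (⇑μ) none = 0 from
      Set.indicator_of_notMem (by simp [memS]) _]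
    rw [zero_add]
    rw [← pairEquiv.tsum_eq (fun q : ℤ × ℤ => Set.indicator {s | memS x s} (⇑μ) (some q))]
    rw [ENNReal.tsum_prod']
    apply tsum_congr; intro m0
    apply tsum_congr; intro l0
    show Set.indicator {s | memS x s} (⇑μ) (some (pairEquiv (m0, l0))) = _
    show Set.indicator {s | memS x s} (⇑μ) (some (l0, l0 + m0)) = _
    by_cases h : l0 ≤ x ∧ x ≤ l0 + m0
    · rw [Set.indicator_of_mem (by exact h) _, if_pos (by omega), mul_one]
    · rw [Set.indicator_of_notMem (by exact h) _, if_neg (by omega), mul_zero]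
  have hw : ∀ m0 : ℤ, SU m0 (fun z : ℤ => if 0 ≤ z ∧ z ≤ m0 then (1 : ℝ≥0∞) else 0) := by
    intro m0
    constructor
    · intro z; exact if_congr (by omega) rfl rfl
    · intro z hz
      beta_reduce
      by_cases h : 0 ≤ z + 1 ∧ z + 1 ≤ m0
      · rw [if_pos h, if_pos (by omega)]
      · rw [if_neg h]; exact zero_le
  have hfin : ∀ m0 : ℤ, (∑' l0 : ℤ, μ (some (l0, l0 + m0))) ≠ ⊤ := by
    intro m0
    apply ne_top_of_le_ne_top (by rw [PMF.tsum_coe]; exact ENNReal.one_ne_top :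
      (∑' s : State, μ s) ≠ ⊤)
    exact ENNReal.tsum_comp_le_tsum_of_injective (fun a b h => by
      simp only [Option.some.injEq, Prod.mk.injEq] at h; exact h.1) _
  have hSU : ∀ m0 : ℤ, SU 0 (fun x => ∑' l0 : ℤ, μ (some (l0, l0 + m0))
      * (if 0 ≤ x - l0 ∧ x - l0 ≤ m0 then (1 : ℝ≥0∞) else 0)) := by
    intro m0
    have h := SU.conv (hsu m0) (hw m0) (hfin m0)
    rw [show -m0 + m0 = 0 from by ring] at h
    exact h
  have heq : (fun x => occ p hp 0 t x) = fun x => ∑' m0 : ℤ, ∑' l0 : ℤ,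
      μ (some (l0, l0 + m0)) * (if 0 ≤ x - l0 ∧ x - l0 ≤ m0 then (1 : ℝ≥0∞) else 0) :=
    funext key
  rw [heq]
  exact SU.tsum_fun hSU

/-- the occupancy function of the process started from {0}
is even and decreasing in |x|. -/
theorem occupancy_even_and_decreasing (p : ℝ≥0∞) (hp0 : 0 < p) (hp1 : p < 1) (t : ℕ) :
    (∀ x : ℤ, occ p hp1 0 t x = occ p hp1 0 t (-x)) ∧
    (∀ x y : ℤ, |x| ≤ |y| → occ p hp1 0 t y ≤ occ p hp1 0 t x) := by
  have hsu := occ_su (p := p) hp1 t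
  constructor
  · intro x
    have h := hsu.1 x
    rwa [zero_sub] at h
  · intro x y hxy
    apply hsu.mono_abs
    rw [sub_zero, sub_zero, abs_mul, abs_mul]
    exact mul_le_mul_of_nonneg_left hxy (abs_nonneg 2)

end RFI
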